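/- Let (R, m) be a commutative noetherian local ring with depth R = 0, and let x be a minimal generator of m such that p = (x) is prime, ann(x) is not m-primary, Assh R = {p}, and R_p is a field. Then, regarding m as an R-module, one has the strict inequalities depth_R m < ldim_R m < dim_R m. -/

import Mathlib

open IsLocalRing CategoryTheory

/-- Krull dimension of a module: the Krull dimension of its support. -/
noncomputable def mdim (R : Type*) [CommRing R] (M : Type*) [AddCommGroup M] [Module R M] :
    WithBot ℕ∞ :=
  Order.krullDim (Module.support R M)

/-- The little dimension of a module over a local ring:
`ldim_R M = inf { dim_R (Rx) : x ∈ M \ mM }` (infimum over the empty set is `⊤`). -/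
noncomputable def ldim (R : Type*) [CommRing R] [IsLocalRing R] (M : Type*) [AddCommGroup M]
    [Module R M] : WithBot ℕ∞ :=
  ⨅ x : {x : M // x ∉ (maximalIdeal R • ⊤ : Submodule R M)},
    mdim R (Submodule.span R {x.1})

/-- Depth of a module over a local ring: the supremum of lengths of regular sequences on `M`
consisting of elements of the maximal ideal. -/
noncomputable def mdepth (R : Type*) [CommRing R] [IsLocalRing R] (M : Type*) [AddCommGroup M]
    [Module R M] : ℕ∞ :=
  sSup {n : ℕ∞ | ∃ rs : List R, (rs.length : ℕ∞) = n ∧ (∀ r ∈ rs, r ∈ maximalIdeal R) ∧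
    RingTheory.Sequence.IsRegular M rs}

private lemma chain_le_quot {R : Type*} [CommRing R] (q₀ : Ideal R) [q₀.IsPrime]
    (l : LTSeries (PrimeSpectrum R)) (hl : ∀ i, q₀ ≤ (l i).asIdeal) :
    (l.length : WithBot ℕ∞) ≤ ringKrullDim (R ⧸ q₀) := by
  have hsurj : Function.Surjective (Ideal.Quotient.mk q₀) := Ideal.Quotient.mk_surjective
  have hker : RingHom.ker (Ideal.Quotient.mk q₀) = q₀ := Ideal.mk_ker
  have hc : ∀ j : Fin (l.length + 1), Ideal.comap (Ideal.Quotient.mk q₀)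
      ((l j).asIdeal.map (Ideal.Quotient.mk q₀)) = (l j).asIdeal := fun j => by
    rw [Ideal.comap_map_of_surjective _ hsurj, ← RingHom.ker_eq_comap_bot, hker,
      sup_eq_left.mpr (hl j)]
  let F : LTSeries (PrimeSpectrum (R ⧸ q₀)) :=
    { length := l.length
      toFun := fun i => ⟨(l i).asIdeal.map (Ideal.Quotient.mk q₀),
        Ideal.map_isPrime_of_surjective hsurj (by rw [hker]; exact hl i)⟩
      step := fun i => by
        show (_ : PrimeSpectrum (R ⧸ q₀)) < _
        rw [← PrimeSpectrum.asIdeal_lt_asIdeal]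
        have h1 : (_ : PrimeSpectrum R) < _ := l.step i
        refine lt_of_le_of_ne (Ideal.map_mono (le_of_lt h1)) fun he => (ne_of_lt h1) ?_
        have h2 := congrArg (Ideal.comap (Ideal.Quotient.mk q₀)) he
        rw [hc, hc] at h2
        exact PrimeSpectrum.ext h2 }
  exact Order.LTSeries.length_le_krullDim F

private lemma quot_le_set {R : Type*} [CommRing R] (I : Ideal R) (S : Set (PrimeSpectrum R))
    (hS : ∀ q : PrimeSpectrum R, I ≤ q.asIdeal → q ∈ S) :
    ringKrullDim (R ⧸ I) ≤ Order.krullDim S := by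
  have hsurj : Function.Surjective (Ideal.Quotient.mk I) := Ideal.Quotient.mk_surjective
  refine Order.krullDim_le_of_strictMono
    (fun q : PrimeSpectrum (R ⧸ I) => (⟨⟨q.asIdeal.comap (Ideal.Quotient.mk I), inferInstance⟩,
      hS _ fun a ha => by
        simp only [Ideal.mem_comap]
        rw [Ideal.Quotient.eq_zero_iff_mem.mpr ha]
        exact zero_mem _⟩ : S)) ?_
  intro a b hab
  rw [Subtype.mk_lt_mk, ← PrimeSpectrum.asIdeal_lt_asIdeal]
  refine lt_of_le_of_ne (Ideal.comap_mono (le_of_lt hab)) fun he => (ne_of_lt hab) ?_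
  exact PrimeSpectrum.ext (Ideal.comap_injective_of_surjective _ hsurj he)

/-- if `depth R = 0` and `x` is a minimal generator of `m` with `(x)` prime,
`ann(x)` not `m`-primary, `Assh R = {(x)}` and `R_{(x)}` a field, then
`depth_R m < ldim_R m < dim_R m`. -/
theorem stmt_7 (R : Type*) [CommRing R] [IsLocalRing R] [IsNoetherianRing R]
    (hdepth : mdepth R R = 0)
    (x : R) (hx : x ∈ maximalIdeal R) (hx2 : x ∉ maximalIdeal R ^ 2)
    [hp : (Ideal.span {x}).IsPrime]
    (hann : (Submodule.span R {x} : Submodule R R).annihilator.radical ≠ maximalIdeal R)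
    (hAssh : {q : Ideal R | ∃ _ : q.IsPrime, ringKrullDim (R ⧸ q) = ringKrullDim R} =
      {Ideal.span {x}})
    (hfield : IsField (Localization.AtPrime (Ideal.span {x}))) :
    (mdepth R (maximalIdeal R) : WithBot ℕ∞) < ldim R (maximalIdeal R) ∧
      ldim R (maximalIdeal R) < mdim R (maximalIdeal R) := by
  have hx0 : x ≠ 0 := fun h => hx2 (h ▸ zero_mem _)
  have hpm : Ideal.span {x} ≤ maximalIdeal R := by
    rw [Ideal.span_le, Set.singleton_subset_iff]; exact hx
  -- a killer of x outside (x)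
  have key : ∃ s : R, s ∉ Ideal.span {x} ∧ s * x = 0 := by
    have h2 : maximalIdeal (Localization.AtPrime (Ideal.span {x})) = ⊥ :=
      IsLocalRing.isField_iff_maximalIdeal_eq.mp hfield
    have h3 : algebraMap R (Localization.AtPrime (Ideal.span {x})) x = 0 := by
      have hxmem : algebraMap R (Localization.AtPrime (Ideal.span {x})) x ∈
          Ideal.map (algebraMap R (Localization.AtPrime (Ideal.span {x}))) (Ideal.span {x}) :=
        Ideal.mem_map_of_mem _ (Ideal.mem_span_singleton_self x)
      rw [Localization.AtPrime.map_eq_maximalIdeal, h2] at hxmem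
      simpa using hxmem
    obtain ⟨s, hs⟩ := (IsLocalization.map_eq_zero_iff (Ideal.span {x}).primeCompl _ _).mp h3
    exact ⟨s.1, s.2, hs⟩
  have hJp : ¬ ((Submodule.span R {x} : Submodule R R).annihilator ≤ Ideal.span {x}) := by
    obtain ⟨s, hs1, hs2⟩ := key
    intro hle
    exact hs1 (hle (by rw [Submodule.mem_annihilator_span_singleton, smul_eq_mul]; exact hs2))
  have hpm_ne : Ideal.span {x} ≠ maximalIdeal R := by
    obtain ⟨s, hs1, hs2⟩ := key
    intro h
    have hsu : IsUnit s := by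
      by_contra hsu
      exact hs1 (h ▸ (IsLocalRing.mem_maximalIdeal s).mpr hsu)
    exact hx0 (by rwa [IsUnit.mul_right_eq_zero hsu] at hs2)
  have hdim_p : ringKrullDim (R ⧸ Ideal.span {x}) = ringKrullDim R := by
    have : Ideal.span {x} ∈ {q : Ideal R | ∃ _ : q.IsPrime,
        ringKrullDim (R ⧸ q) = ringKrullDim R} := by rw [hAssh]; rfl
    exact this.choose_spec
  have hd0 : (0 : WithBot ℕ∞) ≤ ringKrullDim R := ringKrullDim_nonneg_of_nontrivial
  -- every prime containing ann(x) has strictly smaller coheight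
  have fact3 : ∀ q : Ideal R, q.IsPrime →
      (Submodule.span R {x} : Submodule R R).annihilator ≤ q →
      ringKrullDim (R ⧸ q) < ringKrullDim R := by
    intro q hq hle
    refine lt_of_le_of_ne (ringKrullDim_quotient_le q) fun he => ?_
    have : q ∈ ({Ideal.span {x}} : Set (Ideal R)) := by rw [← hAssh]; exact ⟨hq, he⟩
    rw [Set.mem_singleton_iff] at this
    exact hJp (this ▸ hle)
  -- depth of m is zero
  have hzd : ∀ r ∈ maximalIdeal R, ¬ IsSMulRegular (↥(maximalIdeal R)) r := by
    intro r hr hreg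
    have hclaim : ∀ a : R, r * a = 0 → a = 0 := by
      intro a ha
      by_contra ha0
      by_cases ham : a ∈ maximalIdeal R
      · have : r • (⟨a, ham⟩ : ↥(maximalIdeal R)) = 0 := by
          ext; simpa [smul_eq_mul] using ha
        have := hreg (by rw [this, smul_zero] : r • (⟨a, ham⟩ : ↥(maximalIdeal R)) = r • 0)
        exact ha0 (congrArg Subtype.val this)
      · have hau : IsUnit a := by
          by_contra h; exact ham ((IsLocalRing.mem_maximalIdeal a).mpr h)
        have hr0 : r = 0 := by rwa [mul_comm, IsUnit.mul_right_eq_zero hau] at ha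
        have : r • (⟨x, hx⟩ : ↥(maximalIdeal R)) = r • 0 := by
          rw [hr0, zero_smul, zero_smul]
        exact hx0 (congrArg Subtype.val (hreg this))
    have hrR : IsSMulRegular R r := by
      intro a b hab
      have : r * (a - b) = 0 := by
        simp only [smul_eq_mul] at hab
        rw [mul_sub, hab, sub_self]
      exact sub_eq_zero.mp (hclaim _ this)
    have hone : (1 : ℕ∞) ∈ {n : ℕ∞ | ∃ rs : List R, (rs.length : ℕ∞) = n ∧
        (∀ r ∈ rs, r ∈ maximalIdeal R) ∧ RingTheory.Sequence.IsRegular R rs} := by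
      refine ⟨[r], by simp, by simpa using hr, ?_⟩
      refine ⟨(RingTheory.Sequence.isWeaklyRegular_cons_iff R r []).mpr
        ⟨hrR, RingTheory.Sequence.IsWeaklyRegular.nil _ _⟩, fun he => ?_⟩
      have h1 : Ideal.ofList [r] • (⊤ : Submodule R R) ≤ maximalIdeal R := by
        rw [Submodule.smul_le]
        intro c hc n _
        have hcm : c ∈ maximalIdeal R := by
          have : Ideal.ofList [r] ≤ maximalIdeal R := by
            rw [Ideal.ofList_singleton, Ideal.span_le, Set.singleton_subset_iff]; exact hr
          exact this hc
        exact Ideal.mul_mem_right n _ hcm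
      rw [← he] at h1
      exact (IsLocalRing.maximalIdeal.isMaximal R).ne_top (top_le_iff.mp h1)
    have h2 := le_sSup hone
    rw [mdepth] at hdepth
    rw [hdepth] at h2
    simp at h2
  have hdm : mdepth R (maximalIdeal R) = 0 := by
    rw [mdepth]
    refine le_antisymm (sSup_le ?_) zero_le
    rintro n ⟨rs, hlen, hmem, hreg⟩
    match rs, hlen with
    | [], hlen => exact le_of_eq hlen.symm
    | r :: rs', hlen =>
      exfalso
      have h1 := (RingTheory.Sequence.isWeaklyRegular_cons_iff (↥(maximalIdeal R)) r rs').mp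
        hreg.toIsWeaklyRegular
      exact hzd r (hmem r (List.mem_cons_self)) h1.1
  -- ldim m ≥ 1
  have hld : (1 : WithBot ℕ∞) ≤ ldim R (maximalIdeal R) := by
    rw [ldim]
    refine le_iInf ?_
    rintro ⟨y, hy⟩
    rw [mdim]
    have hy0 : y ≠ 0 := fun h => hy (h ▸ zero_mem _)
    have hJy_ne_top : (Submodule.span R {y}).annihilator ≠ ⊤ := fun h =>
      hy0 (Submodule.span_singleton_eq_bot.mp (Submodule.annihilator_eq_top_iff.mp h))
    have hq : ∃ q : Ideal R, q.IsPrime ∧ (Submodule.span R {y}).annihilator ≤ q ∧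
        q ≠ maximalIdeal R := by
      by_contra h
      push_neg at h
      have hrad : ((Submodule.span R {y}).annihilator).radical = maximalIdeal R := by
        rw [Ideal.radical_eq_sInf]
        refine le_antisymm (sInf_le ⟨IsLocalRing.le_maximalIdeal hJy_ne_top, inferInstance⟩)
          (le_sInf ?_)
        rintro q ⟨hq1, hq2⟩
        rw [h q hq2 hq1]
      obtain ⟨n, hn⟩ := Ideal.exists_radical_pow_le_of_fg ((Submodule.span R {y}).annihilator)
        (IsNoetherian.noetherian _)
      rw [hrad] at hn
      have hmn : ¬ (maximalIdeal R ^ n ≤ Ideal.span {x}) := by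
        intro hh
        rcases Nat.eq_zero_or_pos n with h0 | h0
        · rw [h0, pow_zero, Ideal.one_eq_top] at hh
          exact hp.ne_top (top_le_iff.mp hh)
        · exact hpm_ne (le_antisymm hpm (hp.le_of_pow_le hh))
      obtain ⟨t, ht1, ht2⟩ := SetLike.not_le_iff_exists.mp hmn
      have hty : t • y = 0 := by
        rw [← Submodule.mem_annihilator_span_singleton]
        exact hn ht1
      have htyR : t * (y : R) = 0 := by
        have := congrArg Subtype.val hty
        simpa [smul_eq_mul] using this
      have hyp : (y : R) ∈ Ideal.span {x} :=
        (hp.mem_or_mem (show t * (y : R) ∈ Ideal.span {x} by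
          rw [htyR]; exact zero_mem _)).resolve_left ht2
      obtain ⟨r, hr⟩ := Ideal.mem_span_singleton'.mp hyp
      have hru : IsUnit r := by
        by_contra hru
        have hrm : r ∈ maximalIdeal R := (IsLocalRing.mem_maximalIdeal r).mpr hru
        refine hy ?_
        have : y = r • (⟨x, hx⟩ : ↥(maximalIdeal R)) := by
          ext; simpa [smul_eq_mul] using hr.symm
        rw [this]
        exact Submodule.smul_mem_smul hrm Submodule.mem_top
      have hann_eq : (Submodule.span R {y}).annihilator =
          (Submodule.span R {x} : Submodule R R).annihilator := by
        ext a
        rw [Submodule.mem_annihilator_span_singleton, Submodule.mem_annihilator_span_singleton]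
        constructor
        · intro h1
          have h2 : a * (y : R) = 0 := by
            have := congrArg Subtype.val h1
            simpa [smul_eq_mul] using this
          rw [← hr, show a * (r * x) = r * (a * x) by ring] at h2
          rw [smul_eq_mul]
          exact (IsUnit.mul_right_eq_zero hru).mp h2
        · intro h1
          rw [smul_eq_mul] at h1
          ext
          show a * (y : R) = 0
          rw [← hr, show a * (r * x) = r * (a * x) by ring, h1, mul_zero]
      rw [hann_eq] at hrad
      exact hann hrad
    obtain ⟨q, hq1, hq2, hq3⟩ := hq
    haveI : Module.Finite R ↥(Submodule.span R {y}) :=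
      Module.Finite.iff_fg.mpr (Submodule.fg_span_singleton y)
    have hsupp : Module.support R ↥(Submodule.span R {y}) =
        PrimeSpectrum.zeroLocus ((Submodule.span R {y}).annihilator : Set R) :=
      Module.support_eq_zeroLocus
    have hqm : q ≤ maximalIdeal R := IsLocalRing.le_maximalIdeal hq1.ne_top
    let e0 : ↥(Module.support R ↥(Submodule.span R {y})) :=
      ⟨⟨q, hq1⟩, by rw [hsupp]; exact hq2⟩
    let e1 : ↥(Module.support R ↥(Submodule.span R {y})) :=
      ⟨⟨maximalIdeal R, (IsLocalRing.maximalIdeal.isMaximal R).isPrime⟩, by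
        rw [hsupp]; exact IsLocalRing.le_maximalIdeal hJy_ne_top⟩
    have hlt : e0 < e1 := by
      rw [Subtype.mk_lt_mk, ← PrimeSpectrum.asIdeal_lt_asIdeal]
      exact lt_of_le_of_ne hqm hq3
    let l : LTSeries ↥(Module.support R ↥(Submodule.span R {y})) :=
      { length := 1
        toFun := ![e0, e1]
        step := fun i => by
          fin_cases i
          simpa using hlt }
    have := Order.LTSeries.length_le_krullDim l
    exact le_trans (le_of_eq (by simp [l])) this
  -- ldim ≤ mdim of (x)
  have hxnot : (⟨x, hx⟩ : ↥(maximalIdeal R)) ∉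
      (maximalIdeal R • ⊤ : Submodule R ↥(maximalIdeal R)) := by
    intro h
    apply hx2
    have h1 : x ∈ Submodule.map (maximalIdeal R).subtype
        (maximalIdeal R • ⊤ : Submodule R ↥(maximalIdeal R)) :=
      ⟨⟨x, hx⟩, h, rfl⟩
    rw [Submodule.map_smul'', Submodule.map_subtype_top] at h1
    rw [pow_two]
    rwa [Ideal.smul_eq_mul] at h1
  have hann_eq' : (Submodule.span R {(⟨x, hx⟩ : ↥(maximalIdeal R))}).annihilator =
      (Submodule.span R {x} : Submodule R R).annihilator := by
    ext a
    rw [Submodule.mem_annihilator_span_singleton, Submodule.mem_annihilator_span_singleton]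
    constructor
    · intro h
      have : a * x = 0 := congrArg Subtype.val h
      simpa [smul_eq_mul] using this
    · intro h
      rw [smul_eq_mul] at h
      ext
      show a * x = 0
      exact h
  have hla : ldim R (maximalIdeal R) ≤
      Order.krullDim (PrimeSpectrum.zeroLocus
        (((Submodule.span R {x} : Submodule R R).annihilator : Ideal R) : Set R)) := by
    rw [ldim]
    refine le_trans (iInf_le _ ⟨⟨x, hx⟩, hxnot⟩) ?_
    rw [mdim]
    haveI : Module.Finite R ↥(Submodule.span R {(⟨x, hx⟩ : ↥(maximalIdeal R))}) :=
      Module.Finite.iff_fg.mpr (Submodule.fg_span_singleton _)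
    rw [Module.support_eq_zeroLocus]
    have hcoe : (↑(⟨⟨x, hx⟩, hxnot⟩ : {z : ↥(maximalIdeal R) //
        z ∉ (maximalIdeal R • ⊤ : Submodule R ↥(maximalIdeal R))}) : ↥(maximalIdeal R)) =
        ⟨x, hx⟩ := rfl
    rw [hcoe]
    have : Module.annihilator R ↥(Submodule.span R {(⟨x, hx⟩ : ↥(maximalIdeal R))}) =
        (Submodule.span R {x} : Submodule R R).annihilator := hann_eq'
    rw [this]
  -- the zero locus of ann(x) has dimension < dim R
  have hfin : ((Submodule.span R {x} : Submodule R R).annihilator).minimalPrimes.Finite := by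
    rw [Ideal.minimalPrimes_eq_comap]
    exact (minimalPrimes.finite_of_isNoetherianRing _).image _
  have hbot : (⊥ : WithBot ℕ∞) < ringKrullDim R :=
    lt_of_lt_of_le (WithBot.bot_lt_coe (0 : ℕ∞)) hd0
  have hb_lt : hfin.toFinset.sup (fun q => ringKrullDim (R ⧸ q)) < ringKrullDim R := by
    rw [Finset.sup_lt_iff hbot]
    intro q hqF
    rw [Set.Finite.mem_toFinset] at hqF
    exact fact3 q hqF.1.1 hqF.1.2
  have hzl_le : Order.krullDim (PrimeSpectrum.zeroLocus
      (((Submodule.span R {x} : Submodule R R).annihilator : Ideal R) : Set R)) ≤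
      hfin.toFinset.sup (fun q => ringKrullDim (R ⧸ q)) := by
    rw [Order.krullDim]
    refine iSup_le fun l => ?_
    let l' := l.map (fun q => q.1) (Subtype.strictMono_coe _)
    have hq0 : ∀ i, (l'.head).asIdeal ≤ (l' i).asIdeal := fun i => l'.monotone (Fin.zero_le i)
    haveI : (l'.head).asIdeal.IsPrime := (l'.head).2
    have hJq0 : (Submodule.span R {x} : Submodule R R).annihilator ≤ (l'.head).asIdeal :=
      l.head.2
    obtain ⟨q', hq'F, hq'le⟩ := Ideal.exists_minimalPrimes_le hJq0
    haveI : q'.IsPrime := hq'F.1.1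
    have h1 : (l'.length : WithBot ℕ∞) ≤ ringKrullDim (R ⧸ (l'.head).asIdeal) :=
      chain_le_quot _ l' hq0
    have h2 : ringKrullDim (R ⧸ (l'.head).asIdeal) ≤ ringKrullDim (R ⧸ q') := by
      refine ringKrullDim_le_of_surjective (Ideal.Quotient.factor hq'le) ?_
      intro z
      obtain ⟨w, rfl⟩ := Ideal.Quotient.mk_surjective z
      exact ⟨Ideal.Quotient.mk q' w, by simp⟩
    have h3 : ringKrullDim (R ⧸ q') ≤ hfin.toFinset.sup (fun q => ringKrullDim (R ⧸ q)) :=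
      Finset.le_sup (f := fun q => ringKrullDim (R ⧸ q)) (hfin.mem_toFinset.mpr hq'F)
    exact le_trans h1 (le_trans h2 h3)
  -- dim R ≤ mdim m
  haveI : Module.Finite R ↥(maximalIdeal R) :=
    Module.Finite.iff_fg.mpr (IsNoetherian.noetherian _)
  have hannm : Module.annihilator R ↥(maximalIdeal R) ≤ Ideal.span {x} := by
    obtain ⟨t, htm, htp⟩ := SetLike.exists_of_lt (lt_of_le_of_ne hpm hpm_ne)
    intro a ha
    have h0 : a • (⟨t, htm⟩ : ↥(maximalIdeal R)) = 0 := Module.mem_annihilator.mp ha _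
    have hat : a * t = 0 := congrArg Subtype.val h0
    exact (hp.mem_or_mem (show a * t ∈ Ideal.span {x} by
      rw [hat]; exact zero_mem _)).resolve_right htp
  have hdim_le : ringKrullDim R ≤ mdim R (maximalIdeal R) := by
    rw [mdim, ← hdim_p]
    refine quot_le_set _ _ ?_
    intro q hq
    rw [Module.support_eq_zeroLocus, PrimeSpectrum.mem_zeroLocus]
    exact fun a ha => hq (hannm ha)
  constructor
  · rw [hdm]
    refine lt_of_lt_of_le ?_ hld
    rw [WithBot.coe_zero]
    exact zero_lt_one
  · exact lt_of_le_of_lt hla (lt_of_lt_of_le (lt_of_le_of_lt hzl_le hb_lt) hdim_le)
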